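/- With f defined as in the recursive construction (f(1)=m_1; f(i)=m_i(2Σ_{j<i}f(j)+1) for 2≤i≤n; f(i)=(m_{i−1}+1)f(i−1)/m_{i−1} for n+1≤i≤n+r−1; f(n+r)=(m_{n+r−1}+1)f(n+r−1)/m_{n+r−1}+(2^r−L)f(n+1), where m_{n+1}=⋯=m_{n+r}=1), one has Σ_{i=n+1}^{n+r} f(i) = (2^{r+1} − L − 1) f(n+1), and f(n+1) = (1 + m_n)(1 + 2Σ_{i=1}^{n−1} f(i)). -/
import Mathlib


/-- with `f` defined by the recursion of Construction 2, one has
`∑_{i=n+1}^{n+r} f i = (2^{r+1} - L - 1) * f (n+1)` and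
`f (n+1) = (1 + m n) * (1 + 2 * ∑_{i=1}^{n-1} f i)`. -/
theorem stmt_7 (L r n : ℕ) (hL : 0 < L) (hr : 0 < r) (hLr : L ≤ 2 ^ r) (hn : 0 < n)
    (m f : ℕ → ℕ) (hm : ∀ i, 0 < m i)
    (hm1 : ∀ i, n + 1 ≤ i → i ≤ n + r → m i = 1)
    (hf1 : f 1 = m 1)
    (hf2 : ∀ i, 2 ≤ i → i ≤ n → f i = m i * (2 * (∑ j ∈ Finset.Icc 1 (i - 1), f j) + 1))
    (hdvd : ∀ i, 1 ≤ i → i ≤ n + r → m i ∣ f i)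
    (hf3 : ∀ i, n + 1 ≤ i → i ≤ n + r - 1 →
      f i = (m (i - 1) + 1) * (f (i - 1) / m (i - 1)))
    (hf4 : f (n + r) =
      (m (n + r - 1) + 1) * (f (n + r - 1) / m (n + r - 1)) + (2 ^ r - L) * f (n + 1)) :
    (∑ i ∈ Finset.Icc (n + 1) (n + r), f i = (2 ^ (r + 1) - L - 1) * f (n + 1)) ∧
    f (n + 1) = (1 + m n) * (1 + 2 * ∑ i ∈ Finset.Icc 1 (n - 1), f i) := by
  set S := ∑ i ∈ Finset.Icc 1 (n - 1), f i with hS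
  have hdiv : f n / m n = 1 + 2 * S := by
    rcases Nat.eq_or_lt_of_le hn with h1 | h2
    · rw [← h1] at hS ⊢
      simp [hS, hf1, Nat.div_self (hm 1)]
    · rw [hf2 n h2 (le_refl n), Nat.mul_div_cancel_left _ (hm n)]
      omega
  rcases Nat.lt_or_ge r 2 with hr2 | hr2
  · -- r = 1
    have hr1 : r = 1 := by omega
    subst hr1
    have he : n + 1 - 1 = n := by omega
    rw [he, hdiv] at hf4
    have hA : 0 < (m n + 1) * (1 + 2 * S) := by positivity
    interval_cases L
    · -- L = 1 : contradiction
      exfalso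
      have : (2 : ℕ) ^ 1 - 1 = 1 := by norm_num
      rw [this, one_mul] at hf4
      omega
    · have : (2 : ℕ) ^ 1 - 2 = 0 := by norm_num
      rw [this, zero_mul, add_zero] at hf4
      constructor
      · rw [Finset.Icc_self, Finset.sum_singleton]
        norm_num
      · rw [hf4]; ring
  · -- r ≥ 2
    have hsec : f (n + 1) = (1 + m n) * (1 + 2 * S) := by
      have h := hf3 (n + 1) (le_refl _) (by omega)
      rw [show n + 1 - 1 = n from by omega, hdiv] at h
      rw [h]; ring
    have hgeo : ∀ k, 1 ≤ k → k ≤ r - 1 → f (n + k) = 2 ^ (k - 1) * f (n + 1) := by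
      intro k
      induction k with
      | zero => omega
      | succ k ih =>
        intro _ hk2
        rcases Nat.eq_zero_or_pos k with hk0 | hk1
        · subst hk0; simp
        · have hfk := ih hk1 (by omega)
          have h3 := hf3 (n + (k + 1)) (by omega) (by omega)
          rw [show n + (k + 1) - 1 = n + k from by omega] at h3
          rw [hm1 (n + k) (by omega) (by omega), Nat.div_one] at h3
          rw [h3, hfk]
          have h2k : 2 ^ ((k + 1) - 1) = 2 * 2 ^ (k - 1) := by
            rw [← pow_succ']; congr 1; omega
          rw [h2k]; ring
    have hsum : ∀ k, 1 ≤ k → k ≤ r - 1 →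
        ∑ i ∈ Finset.Icc (n + 1) (n + k), f i = (2 ^ k - 1) * f (n + 1) := by
      intro k
      induction k with
      | zero => omega
      | succ k ih =>
        intro _ hk2
        rcases Nat.eq_zero_or_pos k with hk0 | hk1
        · subst hk0; simp
        · rw [show n + (k + 1) = (n + k) + 1 from rfl,
            Finset.sum_Icc_succ_top (by omega : n + 1 ≤ n + k + 1),
            ih hk1 (by omega),
            show (n + k) + 1 = n + (k + 1) from rfl,
            hgeo (k + 1) (by omega) hk2]
          have hc : (2 ^ k - 1) + 2 ^ ((k + 1) - 1) = 2 ^ (k + 1) - 1 := by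
            have h1 : 1 ≤ 2 ^ k := Nat.one_le_two_pow
            rw [show (k + 1) - 1 = k from rfl, pow_succ]; omega
          rw [← Nat.add_mul, hc]
    have hfr : f (n + r) = (2 ^ (r - 1) + (2 ^ r - L)) * f (n + 1) := by
      rw [hf4, hm1 (n + r - 1) (by omega) (by omega), Nat.div_one,
        show n + r - 1 = n + (r - 1) from by omega,
        hgeo (r - 1) (by omega) (le_refl _)]
      have h2 : 2 ^ (r - 1) = 2 * 2 ^ ((r - 1) - 1) := by
        rw [← pow_succ']; congr 1; omega
      rw [h2]; ring
    refine ⟨?_, hsec⟩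
    rw [show n + r = (n + (r - 1)) + 1 from by omega,
      Finset.sum_Icc_succ_top (by omega : n + 1 ≤ n + (r - 1) + 1),
      hsum (r - 1) (by omega) (le_refl _),
      show (n + (r - 1)) + 1 = n + r from by omega, hfr]
    have hc : (2 ^ (r - 1) - 1) + (2 ^ (r - 1) + (2 ^ r - L)) = 2 ^ (r + 1) - L - 1 := by
      have h1 : 1 ≤ 2 ^ (r - 1) := Nat.one_le_two_pow
      have h2 : 2 ^ r = 2 * 2 ^ (r - 1) := by rw [← pow_succ']; congr 1; omega
      have h3 : 2 ^ (r + 1) = 2 * 2 ^ r := by rw [pow_succ]; ring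
      omega
    rw [← Nat.add_mul, hc]
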